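/- Let 0 < q_red < 1, θ ∈ (0,1], C_stb, C_red > 0 be given. Suppose that for consecutive estimators η_ℓ, η_{ℓ+1} indexed over subsets of meshes T_ℓ, T_{ℓ+1} one has: (stability) |η_{ℓ+1}(T_ℓ ∩ T_{ℓ+1}) − η_ℓ(T_ℓ ∩ T_{ℓ+1})| ≤ C_stb ρ_ℓ, (reduction) η_{ℓ+1}(T_{ℓ+1} \ T_ℓ)² ≤ q_red η_ℓ(T_ℓ \ T_{ℓ+1})² + C_red ρ_ℓ², and (Dörfler marking) θ η_ℓ² ≤ η_ℓ(T_ℓ \ T_{ℓ+1})², where ρ_ℓ ≥ 0 and η_ℓ(S)² denotes the sum of squared indicators over S with η_ℓ² = η_ℓ(T_ℓ)². Then for every δ > 0, η_{ℓ+1}² ≤ (1+δ)(1 − (1 − q_red)θ) η_ℓ² + (C_red + (1 + δ^{-1}) C_stb²) ρ_ℓ². In particular, if δ is small enough that q_est := (1+δ)(1 − (1−q_red)θ) < 1, one obtains the estimator reduction η_{ℓ+1}² ≤ q_est η_ℓ² + C_est ρ_ℓ². -/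
import Mathlib


/- Estimator reduction: stability on non-refined elements, reduction on refined elements,
and Dörfler marking imply
`η_{ℓ+1}² ≤ (1+δ)(1−(1−q_red)θ) η_ℓ² + (C_red + (1+δ⁻¹)C_stb²) ρ_ℓ²` for every `δ > 0`. -/
open Classical in
theorem estimator_reduction {α : Type}
    (Tl Tl1 : Finset α)                 -- the meshes `T_ℓ` and `T_{ℓ+1}`
    (ηl ηl1 : α → ℝ)                    -- the refinement indicators on each mesh
    (ρ : ℝ)                             -- the perturbation `ρ_ℓ`, e.g. `‖U_{ℓ+1}−U_ℓ‖_{H¹}`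
    (qred θ Cstb Cred : ℝ)
    (hq0 : 0 < qred) (hq1 : qred < 1) (hθ0 : 0 < θ) (hθ1 : θ ≤ 1)
    (hCstb : 0 < Cstb) (hCred : 0 < Cred) (hρ : 0 ≤ ρ)
    (hηl : ∀ T, 0 ≤ ηl T) (hηl1 : ∀ T, 0 ≤ ηl1 T)
    -- stability on non-refined elements:
    (hstab : |Real.sqrt (∑ T ∈ Tl ∩ Tl1, ηl1 T ^ 2) -
              Real.sqrt (∑ T ∈ Tl ∩ Tl1, ηl T ^ 2)| ≤ Cstb * ρ)
    -- reduction on refined elements: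
    (hred : ∑ T ∈ Tl1 \ Tl, ηl1 T ^ 2 ≤
        qred * ∑ T ∈ Tl \ Tl1, ηl T ^ 2 + Cred * ρ ^ 2)
    -- Dörfler marking (marked, hence refined, elements control `θ η_ℓ²`):
    (hdoerfler : θ * ∑ T ∈ Tl, ηl T ^ 2 ≤ ∑ T ∈ Tl \ Tl1, ηl T ^ 2) :
    ∀ δ : ℝ, 0 < δ →
      ∑ T ∈ Tl1, ηl1 T ^ 2 ≤
        (1 + δ) * (1 - (1 - qred) * θ) * ∑ T ∈ Tl, ηl T ^ 2
          + (Cred + (1 + δ⁻¹) * Cstb ^ 2) * ρ ^ 2 := by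
  intro δ hδ
  set A := ∑ T ∈ Tl ∩ Tl1, ηl1 T ^ 2 with hAdef
  set B := ∑ T ∈ Tl ∩ Tl1, ηl T ^ 2 with hBdef
  set R := ∑ T ∈ Tl1 \ Tl, ηl1 T ^ 2 with hRdef
  set M := ∑ T ∈ Tl \ Tl1, ηl T ^ 2 with hMdef
  have hA0 : 0 ≤ A := Finset.sum_nonneg fun T _ => sq_nonneg _
  have hB0 : 0 ≤ B := Finset.sum_nonneg fun T _ => sq_nonneg _
  have hM0 : 0 ≤ M := Finset.sum_nonneg fun T _ => sq_nonneg _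
  have hsplit1 : ∑ T ∈ Tl1, ηl1 T ^ 2 = A + R := by
    rw [hAdef, hRdef, Finset.inter_comm, ← Finset.sum_inter_add_sum_sdiff Tl1 Tl]
  have hsplitl : ∑ T ∈ Tl, ηl T ^ 2 = B + M := by
    rw [hBdef, hMdef, ← Finset.sum_inter_add_sum_sdiff Tl Tl1]
  -- stability: √A ≤ √B + Cstb ρ
  have hsqrt : Real.sqrt A ≤ Real.sqrt B + Cstb * ρ := by
    have := abs_le.1 hstab
    linarith [this.2]
  have hAle : A ≤ (1 + δ) * B + (1 + δ⁻¹) * Cstb ^ 2 * ρ ^ 2 := by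
    have hsA : Real.sqrt A ^ 2 = A := Real.sq_sqrt hA0
    have hsB : Real.sqrt B ^ 2 = B := Real.sq_sqrt hB0
    have h1 : A ≤ (Real.sqrt B + Cstb * ρ) ^ 2 := by
      have h0 : 0 ≤ Real.sqrt B + Cstb * ρ := by positivity
      calc A = Real.sqrt A ^ 2 := hsA.symm
        _ ≤ (Real.sqrt B + Cstb * ρ) ^ 2 := by
            apply pow_le_pow_left₀ (Real.sqrt_nonneg A) hsqrt
    have hy : 2 * (Real.sqrt B * (Cstb * ρ)) ≤ δ * B + δ⁻¹ * (Cstb * ρ) ^ 2 := by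
      have key : 0 ≤ δ⁻¹ * (δ * Real.sqrt B - Cstb * ρ) ^ 2 :=
        mul_nonneg (inv_pos.2 hδ).le (sq_nonneg _)
      have hxy : δ⁻¹ * (δ * Real.sqrt B - Cstb * ρ) ^ 2
          = δ * B - 2 * (Real.sqrt B * (Cstb * ρ)) + δ⁻¹ * (Cstb * ρ) ^ 2 := by
        field_simp; ring_nf; rw [hsB]
      linarith [hxy ▸ key]
    nlinarith [h1, hsB]
  -- combine
  have hfinal : A + R ≤ (1 + δ) * (B + qred * M) + (Cred + (1 + δ⁻¹) * Cstb ^ 2) * ρ ^ 2 := by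
    nlinarith [hred, hAle, mul_nonneg (mul_nonneg hδ.le hq0.le) hM0]
  have hBq : B + qred * M ≤ (1 - (1 - qred) * θ) * (B + M) := by
    have hd : θ * (B + M) ≤ M := by rw [← hsplitl]; exact hdoerfler
    nlinarith
  rw [hsplit1, hsplitl]
  have h1δ : (0:ℝ) < 1 + δ := by linarith
  calc A + R ≤ (1 + δ) * (B + qred * M) + (Cred + (1 + δ⁻¹) * Cstb ^ 2) * ρ ^ 2 := hfinal
    _ ≤ (1 + δ) * ((1 - (1 - qred) * θ) * (B + M)) + (Cred + (1 + δ⁻¹) * Cstb ^ 2) * ρ ^ 2 := by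
        have := mul_le_mul_of_nonneg_left hBq (le_of_lt h1δ)
        linarith
    _ = (1 + δ) * (1 - (1 - qred) * θ) * (B + M) + (Cred + (1 + δ⁻¹) * Cstb ^ 2) * ρ ^ 2 := by
        ring
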